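/- Let E be a quadratic word equation and CA(E) its associated counter system. Every transition (E₁, v₁) → (E₂, v₂) of CA(E) satisfies |E₂| ≤ |E₁| and v₂ ⪯ v₁ (componentwise), and if v₂ = v₁ then |E₂| < |E₁|. Consequently, every path in CA(E) starting from a configuration (E₀, v₀) has length at most |E₀| + Σ_{x ∈ V} v₀(x); in particular, CA(E) terminates from every configuration. -/

import Mathlib

namespace WordEq

variable {A V : Type*}

/-- A word over the alphabet of constants `A` and variables `V`. -/
abbrev Word (A V : Type*) := List (A ⊕ V)

/-- A word equation `L = R`, given as the pair `(L, R)`. -/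
abbrev Equation (A V : Type*) := Word A V × Word A V

/-- Substitute the word `r` for every occurrence of the variable `x` in `w`. -/
def substVar [DecidableEq V] (x : V) (r : Word A V) (w : Word A V) : Word A V :=
  w.flatMap fun s =>
    match s with
    | Sum.inl a => [Sum.inl a]
    | Sum.inr y => if y = x then r else [Sum.inr y]

/-- The number of occurrences of the variable `x` in the equation `E`
(counting both sides). -/
def varCount [DecidableEq A] [DecidableEq V] (E : Equation A V) (x : V) : ℕ :=
  (E.1 ++ E.2).count (Sum.inr x)

/-- An equation is quadratic if every variable occurs at most twice. -/
def Quadratic [DecidableEq A] [DecidableEq V] (E : Equation A V) : Prop :=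
  ∀ x : V, varCount E x ≤ 2

/-- Apply a substitution (a map from variables to constant words) to a word,
i.e. the unique monoid homomorphism `(A ∪ V)* → A*` extending `σ` and fixing
every constant. -/
def applySub (σ : V → List A) (w : Word A V) : List A :=
  w.flatMap fun s =>
    match s with
    | Sum.inl a => [a]
    | Sum.inr x => σ x

/-- `σ` is a solution of the word equation `E`. -/
def IsSolution (σ : V → List A) (E : Equation A V) : Prop :=
  applySub σ E.1 = applySub σ E.2

/-- The length `|E| = |L| + |R|` of a word equation. -/
def eqLen (E : Equation A V) : ℕ := E.1.length + E.2.length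

/-- The Nielsen transformation (Levi's method) rewriting relation on word
equations.  The rules `p1`–`p4` remove a nonempty prefix from an equation
`α·w₁ = β·w₂`; the rules `eraseL`/`eraseR` erase a variable that is guessed to
denote the empty word (substituting `ε` for it everywhere). -/
inductive Nielsen [DecidableEq V] : Equation A V → Equation A V → Prop
  | eraseL (x : V) (w₁ w₂ : Word A V) :
      Nielsen (Sum.inr x :: w₁, w₂) (substVar x [] w₁, substVar x [] w₂)
  | eraseR (w₁ : Word A V) (x : V) (w₂ : Word A V) :
      Nielsen (w₁, Sum.inr x :: w₂) (substVar x [] w₁, substVar x [] w₂)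
  | p1 (α : A ⊕ V) (w₁ w₂ : Word A V) :
      Nielsen (α :: w₁, α :: w₂) (w₁, w₂)
  | p2 (a : A) (y : V) (w₁ w₂ : Word A V) :
      Nielsen (Sum.inl a :: w₁, Sum.inr y :: w₂)
        (substVar y [Sum.inl a, Sum.inr y] w₁,
          Sum.inr y :: substVar y [Sum.inl a, Sum.inr y] w₂)
  | p3 (x : V) (a : A) (w₁ w₂ : Word A V) :
      Nielsen (Sum.inr x :: w₁, Sum.inl a :: w₂)
        (Sum.inr x :: substVar x [Sum.inl a, Sum.inr x] w₁,
          substVar x [Sum.inl a, Sum.inr x] w₂)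
  | p4L (x y : V) (hxy : x ≠ y) (w₁ w₂ : Word A V) :
      Nielsen (Sum.inr x :: w₁, Sum.inr y :: w₂)
        (substVar y [Sum.inr x, Sum.inr y] w₁,
          Sum.inr y :: substVar y [Sum.inr x, Sum.inr y] w₂)
  | p4R (x y : V) (hxy : x ≠ y) (w₁ w₂ : Word A V) :
      Nielsen (Sum.inr x :: w₁, Sum.inr y :: w₂)
        (Sum.inr x :: substVar x [Sum.inr y, Sum.inr x] w₁,
          substVar x [Sum.inr y, Sum.inr x] w₂)

/-- The transition relation of the counter system `CA(E)` associated with a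
word equation: configurations are pairs of an equation (a control state) and a
valuation of the counters (one counter per variable, standing for the length
of that variable).  Each Nielsen step induces a transition with the
corresponding Presburger guard/update on the counters. -/
inductive CStep [DecidableEq V] :
    Equation A V × (V → ℕ) → Equation A V × (V → ℕ) → Prop
  | eraseL (x : V) (w₁ w₂ : Word A V) (v : V → ℕ) (hx : v x = 0) :
      CStep ((Sum.inr x :: w₁, w₂), v) ((substVar x [] w₁, substVar x [] w₂), v)
  | eraseR (w₁ : Word A V) (x : V) (w₂ : Word A V) (v : V → ℕ) (hx : v x = 0) :
      CStep ((w₁, Sum.inr x :: w₂), v) ((substVar x [] w₁, substVar x [] w₂), v)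
  | p1 (α : A ⊕ V) (w₁ w₂ : Word A V) (v : V → ℕ) :
      CStep ((α :: w₁, α :: w₂), v) ((w₁, w₂), v)
  | p2 (a : A) (y : V) (w₁ w₂ : Word A V) (v : V → ℕ) (hy : 0 < v y) :
      CStep ((Sum.inl a :: w₁, Sum.inr y :: w₂), v)
        ((substVar y [Sum.inl a, Sum.inr y] w₁,
          Sum.inr y :: substVar y [Sum.inl a, Sum.inr y] w₂),
          Function.update v y (v y - 1))
  | p3 (x : V) (a : A) (w₁ w₂ : Word A V) (v : V → ℕ) (hx : 0 < v x) :
      CStep ((Sum.inr x :: w₁, Sum.inl a :: w₂), v)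
        ((Sum.inr x :: substVar x [Sum.inl a, Sum.inr x] w₁,
          substVar x [Sum.inl a, Sum.inr x] w₂),
          Function.update v x (v x - 1))
  | p4L (x y : V) (hxy : x ≠ y) (w₁ w₂ : Word A V) (v : V → ℕ)
      (h₁ : 0 < v x) (h₂ : v x ≤ v y) :
      CStep ((Sum.inr x :: w₁, Sum.inr y :: w₂), v)
        ((substVar y [Sum.inr x, Sum.inr y] w₁,
          Sum.inr y :: substVar y [Sum.inr x, Sum.inr y] w₂),
          Function.update v y (v y - v x))
  | p4R (x y : V) (hxy : x ≠ y) (w₁ w₂ : Word A V) (v : V → ℕ)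
      (h₁ : 0 < v y) (h₂ : v y ≤ v x) :
      CStep ((Sum.inr x :: w₁, Sum.inr y :: w₂), v)
        ((Sum.inr x :: substVar x [Sum.inr y, Sum.inr x] w₁,
          substVar x [Sum.inr y, Sum.inr x] w₂),
          Function.update v x (v x - v y))

instance sumLawfulBEq [DecidableEq A] [DecidableEq V] : LawfulBEq (A ⊕ V) where
  eq_of_beq {a b} h := by
    cases a <;> cases b
    · exact congrArg Sum.inl (eq_of_beq h)
    · exact Bool.noConfusion h
    · exact Bool.noConfusion h
    · exact congrArg Sum.inr (eq_of_beq h)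
  rfl {a} := by
    cases a
    · exact ReflBEq.rfl (α := A)
    · exact ReflBEq.rfl (α := V)


lemma length_substVar [DecidableEq A] [DecidableEq V] (x : V) (r w : Word A V) :
    (substVar x r w).length + w.count (Sum.inr x) =
      w.length + w.count (Sum.inr x) * r.length := by
  induction w with
  | nil => simp [substVar]
  | cons b w ih =>
    rcases b with a | y
    · simp only [substVar, List.flatMap_cons, List.length_append, List.count_cons,
        beq_iff_eq, reduceCtorEq, if_false, List.length_cons, List.length_singleton, List.length_nil, Nat.add_zero] at *
      omega
    · by_cases h : y = x
      · subst h
        simp only [substVar, List.flatMap_cons, List.length_append, List.count_cons,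
          beq_iff_eq, if_pos rfl, eq_self_iff_true, if_true, List.length_cons,
          Nat.add_mul, Nat.one_mul] at *
        omega
      · simp only [substVar, List.flatMap_cons, List.length_append, List.count_cons,
          beq_iff_eq, Sum.inr.injEq, if_neg h, List.length_cons, List.length_singleton, List.length_nil,
          if_neg (fun hh : Sum.inr y = (Sum.inr x : A ⊕ V) => h (Sum.inr.inj hh)), Nat.add_zero] at *
        omega


lemma count_substVar [DecidableEq A] [DecidableEq V] (x : V) (r w : Word A V) (s : A ⊕ V) :
    (substVar x r w).count s =
      (if s = Sum.inr x then 0 else w.count s) + w.count (Sum.inr x) * r.count s := by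
  induction w with
  | nil => simp [substVar]
  | cons b w ih =>
    rcases b with a | y
    · simp only [substVar, List.flatMap_cons, List.count_append, List.count_cons,
        beq_iff_eq, reduceCtorEq, if_false, List.count_singleton, List.count_nil,
        Nat.add_mul, Nat.one_mul, Nat.add_zero] at *
      split_ifs with h1 h2 <;> simp_all <;> omega
    · by_cases h : y = x
      · subst h
        simp only [substVar, List.flatMap_cons, List.count_append, List.count_cons,
          beq_iff_eq, if_pos rfl, eq_self_iff_true, if_true,
          Nat.add_mul, Nat.one_mul] at *
        split_ifs with h1 <;> simp_all <;> omega
      · have hxy : ¬ ((Sum.inr y : A ⊕ V) = Sum.inr x) := fun hh => h (Sum.inr.inj hh)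
        simp only [substVar, List.flatMap_cons, List.count_append, List.count_cons,
          beq_iff_eq, Sum.inr.injEq, if_neg h, if_neg hxy, Nat.add_mul, Nat.one_mul,
          List.count_singleton] at *
        split_ifs with h1 h2 <;> simp_all <;> omega

lemma quadratic_of_nielsen [DecidableEq A] [DecidableEq V] {E₁ E₂ : Equation A V}
    (h : Nielsen E₁ E₂) (hq : Quadratic E₁) : Quadratic E₂ := by
  intro z
  have h1 := hq z
  cases h with
  | eraseL x w₁ w₂ =>
    clear hq
    simp only [varCount, List.count_append, List.count_cons, count_substVar,
      beq_iff_eq, List.count_nil, reduceCtorEq, Sum.inr.injEq, if_false,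
      Nat.mul_zero, Nat.add_zero, Nat.zero_add] at *
    rcases eq_or_ne z x with rfl | hzx
    · simp only [eq_self_iff_true, if_true, if_pos rfl] at *; omega
    · simp only [if_neg hzx, if_neg (Ne.symm hzx)] at *; omega
  | eraseR w₁ x w₂ =>
    clear hq
    simp only [varCount, List.count_append, List.count_cons, count_substVar,
      beq_iff_eq, List.count_nil, reduceCtorEq, Sum.inr.injEq, if_false,
      Nat.mul_zero, Nat.add_zero, Nat.zero_add] at *
    rcases eq_or_ne z x with rfl | hzx
    · simp only [eq_self_iff_true, if_true, if_pos rfl] at *; omega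
    · simp only [if_neg hzx, if_neg (Ne.symm hzx)] at *; omega
  | p1 α w₁ w₂ =>
    clear hq
    simp only [varCount, List.count_append, List.count_cons, beq_iff_eq] at *
    split_ifs at * <;> omega
  | p2 a y w₁ w₂ =>
    have h2 := hq y
    clear hq
    simp only [varCount, List.count_append, List.count_cons, count_substVar,
      beq_iff_eq, List.count_nil, reduceCtorEq, Sum.inr.injEq, if_false,
      eq_self_iff_true, if_true, Nat.zero_add, Nat.add_zero, Nat.mul_one,
      Nat.mul_zero, Nat.one_mul, Nat.zero_mul] at *
    rcases eq_or_ne z y with rfl | hzy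
    · simp only [eq_self_iff_true, if_true, if_pos rfl, Nat.zero_add, Nat.add_zero,
        Nat.mul_one] at *
      omega
    · simp only [if_neg hzy, if_neg (Ne.symm hzy), Nat.zero_add, Nat.add_zero,
        Nat.mul_zero] at *
      omega
  | p3 x a w₁ w₂ =>
    have h2 := hq x
    clear hq
    simp only [varCount, List.count_append, List.count_cons, count_substVar,
      beq_iff_eq, List.count_nil, reduceCtorEq, Sum.inr.injEq, if_false,
      eq_self_iff_true, if_true, Nat.zero_add, Nat.add_zero, Nat.mul_one,
      Nat.mul_zero, Nat.one_mul, Nat.zero_mul] at *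
    rcases eq_or_ne z x with rfl | hzx
    · simp only [eq_self_iff_true, if_true, if_pos rfl, Nat.zero_add, Nat.add_zero,
        Nat.mul_one] at *
      omega
    · simp only [if_neg hzx, if_neg (Ne.symm hzx), Nat.zero_add, Nat.add_zero,
        Nat.mul_zero] at *
      omega
  | p4L x y hxy w₁ w₂ =>
    have h2 := hq x
    have h3 := hq y
    clear hq
    simp only [varCount, List.count_append, List.count_cons, count_substVar,
      beq_iff_eq, List.count_nil, reduceCtorEq, Sum.inr.injEq, if_false,
      eq_self_iff_true, if_true, if_neg hxy, if_neg (Ne.symm hxy),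
      Nat.zero_add, Nat.add_zero, Nat.mul_one, Nat.mul_zero, Nat.one_mul,
      Nat.zero_mul] at *
    rcases eq_or_ne z y with rfl | hzy
    · simp only [eq_self_iff_true, if_true, if_pos rfl, if_neg hxy,
        if_neg (Ne.symm hxy), Nat.zero_add, Nat.add_zero, Nat.mul_one] at *
      omega
    · rcases eq_or_ne z x with rfl | hzx
      · simp only [eq_self_iff_true, if_true, if_pos rfl, if_neg hzy,
          if_neg (Ne.symm hzy), Nat.zero_add, Nat.add_zero, Nat.mul_one] at *
        omega
      · simp only [if_neg hzy, if_neg (Ne.symm hzy), if_neg hzx,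
          if_neg (Ne.symm hzx), Nat.zero_add, Nat.add_zero, Nat.mul_zero] at *
        omega
  | p4R x y hxy w₁ w₂ =>
    have h2 := hq x
    have h3 := hq y
    clear hq
    simp only [varCount, List.count_append, List.count_cons, count_substVar,
      beq_iff_eq, List.count_nil, reduceCtorEq, Sum.inr.injEq, if_false,
      eq_self_iff_true, if_true, if_neg hxy, if_neg (Ne.symm hxy),
      Nat.zero_add, Nat.add_zero, Nat.mul_one, Nat.mul_zero, Nat.one_mul,
      Nat.zero_mul] at *
    rcases eq_or_ne z x with rfl | hzx
    · simp only [eq_self_iff_true, if_true, if_pos rfl, if_neg hxy,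
        if_neg (Ne.symm hxy), Nat.zero_add, Nat.add_zero, Nat.mul_one] at *
      omega
    · rcases eq_or_ne z y with rfl | hzy
      · simp only [eq_self_iff_true, if_true, if_pos rfl, if_neg hzx,
          if_neg (Ne.symm hzx), Nat.zero_add, Nat.add_zero, Nat.mul_one] at *
        omega
      · simp only [if_neg hzy, if_neg (Ne.symm hzy), if_neg hzx,
          if_neg (Ne.symm hzx), Nat.zero_add, Nat.add_zero, Nat.mul_zero] at *
        omega


lemma nielsen_of_cstep [DecidableEq V] {c₁ c₂ : Equation A V × (V → ℕ)}
    (h : CStep c₁ c₂) : Nielsen c₁.1 c₂.1 := by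
  cases h with
  | eraseL x w₁ w₂ v hx => exact Nielsen.eraseL x w₁ w₂
  | eraseR w₁ x w₂ v hx => exact Nielsen.eraseR w₁ x w₂
  | p1 α w₁ w₂ v => exact Nielsen.p1 α w₁ w₂
  | p2 a y w₁ w₂ v hy => exact Nielsen.p2 a y w₁ w₂
  | p3 x a w₁ w₂ v hx => exact Nielsen.p3 x a w₁ w₂
  | p4L x y hxy w₁ w₂ v h₁ h₂ => exact Nielsen.p4L x y hxy w₁ w₂
  | p4R x y hxy w₁ w₂ v h₁ h₂ => exact Nielsen.p4R x y hxy w₁ w₂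

lemma quadratic_reach [DecidableEq A] [DecidableEq V] {E E' : Equation A V}
    (h : Relation.ReflTransGen Nielsen E E') (hq : Quadratic E) : Quadratic E' := by
  induction h with
  | refl => exact hq
  | tail _ hstep ih => exact quadratic_of_nielsen hstep ih

lemma cstep_bound [DecidableEq A] [DecidableEq V] {c₁ c₂ : Equation A V × (V → ℕ)}
    (hq : Quadratic c₁.1) (h : CStep c₁ c₂) :
    eqLen c₂.1 ≤ eqLen c₁.1 ∧ (∀ x, c₂.2 x ≤ c₁.2 x) ∧
      (c₂.2 = c₁.2 → eqLen c₂.1 < eqLen c₁.1) := by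
  cases h with
  | eraseL x w₁ w₂ v hx =>
    have l1 := length_substVar x [] w₁
    have l2 := length_substVar x [] w₂
    simp only [List.length_nil, Nat.mul_zero, Nat.add_zero] at l1 l2
    exact ⟨by simp only [eqLen, List.length_cons]; omega, fun _ => le_rfl,
      fun _ => by simp only [eqLen, List.length_cons]; omega⟩
  | eraseR w₁ x w₂ v hx =>
    have l1 := length_substVar x [] w₁
    have l2 := length_substVar x [] w₂
    simp only [List.length_nil, Nat.mul_zero, Nat.add_zero] at l1 l2
    exact ⟨by simp only [eqLen, List.length_cons]; omega, fun _ => le_rfl,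
      fun _ => by simp only [eqLen, List.length_cons]; omega⟩
  | p1 α w₁ w₂ v =>
    exact ⟨by simp only [eqLen, List.length_cons]; omega, fun _ => le_rfl,
      fun _ => by simp only [eqLen, List.length_cons]; omega⟩
  | p2 a y w₁ w₂ v hy =>
    have hqy := hq y
    simp only [varCount, List.count_append, List.count_cons, beq_iff_eq,
      reduceCtorEq, if_false, eq_self_iff_true, if_true] at hqy
    have l1 := length_substVar y [Sum.inl a, Sum.inr y] w₁
    have l2 := length_substVar y [Sum.inl a, Sum.inr y] w₂
    simp only [List.length_cons, List.length_nil] at l1 l2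
    refine ⟨by simp only [eqLen, List.length_cons]; omega, ?_, ?_⟩
    · intro z
      rcases eq_or_ne z y with rfl | hzy
      · simp only [Function.update_self]; omega
      · simp only [Function.update_of_ne hzy]; exact le_rfl
    · intro hv
      have := congrFun hv y
      simp only [Function.update_self] at this
      omega
  | p3 x a w₁ w₂ v hx =>
    have hqx := hq x
    simp only [varCount, List.count_append, List.count_cons, beq_iff_eq,
      reduceCtorEq, if_false, eq_self_iff_true, if_true] at hqx
    have l1 := length_substVar x [Sum.inl a, Sum.inr x] w₁
    have l2 := length_substVar x [Sum.inl a, Sum.inr x] w₂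
    simp only [List.length_cons, List.length_nil] at l1 l2
    refine ⟨by simp only [eqLen, List.length_cons]; omega, ?_, ?_⟩
    · intro z
      rcases eq_or_ne z x with rfl | hzx
      · simp only [Function.update_self]; omega
      · simp only [Function.update_of_ne hzx]; exact le_rfl
    · intro hv
      have := congrFun hv x
      simp only [Function.update_self] at this
      omega
  | p4L x y hxy w₁ w₂ v h₁ h₂ =>
    have hqy := hq y
    simp only [varCount, List.count_append, List.count_cons, beq_iff_eq,
      Sum.inr.injEq, if_neg hxy, eq_self_iff_true, if_true, if_false] at hqy
    have l1 := length_substVar y [Sum.inr x, Sum.inr y] w₁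
    have l2 := length_substVar y [Sum.inr x, Sum.inr y] w₂
    simp only [List.length_cons, List.length_nil] at l1 l2
    refine ⟨by simp only [eqLen, List.length_cons]; omega, ?_, ?_⟩
    · intro z
      rcases eq_or_ne z y with rfl | hzy
      · simp only [Function.update_self]; omega
      · simp only [Function.update_of_ne hzy]; exact le_rfl
    · intro hv
      have := congrFun hv y
      simp only [Function.update_self] at this
      omega
  | p4R x y hxy w₁ w₂ v h₁ h₂ =>
    have hqx := hq x
    simp only [varCount, List.count_append, List.count_cons, beq_iff_eq,
      Sum.inr.injEq, if_neg (Ne.symm hxy), eq_self_iff_true, if_true, if_false] at hqx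
    have l1 := length_substVar x [Sum.inr y, Sum.inr x] w₁
    have l2 := length_substVar x [Sum.inr y, Sum.inr x] w₂
    simp only [List.length_cons, List.length_nil] at l1 l2
    refine ⟨by simp only [eqLen, List.length_cons]; omega, ?_, ?_⟩
    · intro z
      rcases eq_or_ne z x with rfl | hzx
      · simp only [Function.update_self]; omega
      · simp only [Function.update_of_ne hzx]; exact le_rfl
    · intro hv
      have := congrFun hv x
      simp only [Function.update_self] at this
      omega

/-- In the counter system `CA(E)` of a quadratic word
equation `E`, every transition `(E₁, v₁) → (E₂, v₂)` (from a control state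
reachable from `E`) satisfies `|E₂| ≤ |E₁|`, `v₂ ⪯ v₁`, and if `v₂ = v₁` then
`|E₂| < |E₁|`.  Consequently, every path starting in a configuration
`(E₀, v₀)` has length at most `|E₀| + Σ_x v₀(x)`; in particular `CA(E)`
terminates from every configuration. -/
theorem counterSystem_terminates
    [Finite A] [Fintype V] [DecidableEq A] [DecidableEq V]
    (E : Equation A V) (hq : Quadratic E) :
    (∀ (E₁ E₂ : Equation A V) (v₁ v₂ : V → ℕ),
        Relation.ReflTransGen Nielsen E E₁ →
        CStep (E₁, v₁) (E₂, v₂) →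
          eqLen E₂ ≤ eqLen E₁ ∧ (∀ x : V, v₂ x ≤ v₁ x) ∧
            (v₂ = v₁ → eqLen E₂ < eqLen E₁)) ∧
    (∀ (E₀ : Equation A V) (v₀ : V → ℕ),
        Relation.ReflTransGen Nielsen E E₀ →
        ∀ (n : ℕ) (c : ℕ → Equation A V × (V → ℕ)),
          c 0 = (E₀, v₀) → (∀ i < n, CStep (c i) (c (i + 1))) →
            n ≤ eqLen E₀ + ∑ x : V, v₀ x) := by
  have key : ∀ (E₁ E₂ : Equation A V) (v₁ v₂ : V → ℕ),
      Relation.ReflTransGen Nielsen E E₁ → CStep (E₁, v₁) (E₂, v₂) →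
        eqLen E₂ ≤ eqLen E₁ ∧ (∀ x : V, v₂ x ≤ v₁ x) ∧
          (v₂ = v₁ → eqLen E₂ < eqLen E₁) := by
    intro E₁ E₂ v₁ v₂ hreach hstep
    exact cstep_bound (quadratic_reach hreach hq) hstep
  refine ⟨key, ?_⟩
  intro E₀ v₀ hreach n c hc0 hsteps
  have mono : ∀ i, i ≤ n → Relation.ReflTransGen Nielsen E (c i).1 ∧
      eqLen (c i).1 + ∑ x : V, (c i).2 x + i ≤ eqLen E₀ + ∑ x : V, v₀ x := by
    intro i
    induction i with
    | zero => intro _; rw [hc0]; exact ⟨hreach, le_of_eq rfl⟩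
    | succ k ih =>
      intro hkn
      obtain ⟨hr, hb⟩ := ih (by omega)
      have hs := hsteps k (by omega)
      obtain ⟨hle, hvle, hlt⟩ := cstep_bound (quadratic_reach hr hq) hs
      have hmu : eqLen (c (k + 1)).1 + ∑ x : V, (c (k + 1)).2 x <
          eqLen (c k).1 + ∑ x : V, (c k).2 x := by
        by_cases hv : (c (k + 1)).2 = (c k).2
        · have h1 := hlt hv
          have h2 : ∑ x : V, (c (k + 1)).2 x = ∑ x : V, (c k).2 x := by rw [hv]
          omega
        · obtain ⟨z, hne⟩ := Function.ne_iff.mp hv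
          have h2 : ∑ x : V, (c (k + 1)).2 x < ∑ x : V, (c k).2 x :=
            Finset.sum_lt_sum (fun i _ => hvle i)
              ⟨z, Finset.mem_univ z, lt_of_le_of_ne (hvle z) hne⟩
          omega
      exact ⟨hr.tail (nielsen_of_cstep hs), by omega⟩
  obtain ⟨-, hb⟩ := mono n le_rfl
  omega


end WordEq
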